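/- For any poset (X, ≤), each equivalence class of the partially commutative monoid L(X, ≤) (the quotient of the free monoid X* by the congruence allowing adjacent comparable distinct letters to be swapped) contains exactly one minimal word, i.e., exactly one word with empty descent set. -/

import Mathlib

inductive PCM.Adj {X : Type*} [PartialOrder X] : List X → List X → Prop
  | swap (u v : List X) (a b : X) (hne : a ≠ b) (hcomp : a ≤ b ∨ b ≤ a) :
      PCM.Adj (u ++ a :: b :: v) (u ++ b :: a :: v)

def PCM.Equiv {X : Type*} [PartialOrder X] (w w' : List X) : Prop :=
  Relation.ReflTransGen PCM.Adj w w'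

def PCM.DES {X : Type*} [PartialOrder X] (w : List X) : Set ℕ :=
  {i | ∃ h : i < w.length, 0 < i ∧ w[i]'h < w[i - 1]'(by omega)}

namespace PCMAux
variable {X : Type*} [PartialOrder X]

open Classical in
noncomputable def ins (a : X) : List X → List X
  | [] => [a]
  | y :: t => if y < a then y :: ins a t else a :: y :: t

open Classical in
noncomputable def norm : List X → List X
  | [] => []
  | a :: t => ins a (norm t)

lemma adj_cons {c : X} {w w' : List X} (h : PCM.Adj w w') :
    PCM.Adj (c :: w) (c :: w') := by
  cases h with
  | swap u v a b hne hcomp => exact PCM.Adj.swap (c :: u) v a b hne hcomp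

lemma equiv_cons {c : X} {w w' : List X} (h : PCM.Equiv w w') :
    PCM.Equiv (c :: w) (c :: w') :=
  Relation.ReflTransGen.lift (List.cons c) (fun _ _ => adj_cons) _ _ h

lemma equiv_ins (a : X) (l : List X) : PCM.Equiv (a :: l) (ins a l) := by
  induction l with
  | nil => exact Relation.ReflTransGen.refl
  | cons y t ih =>
    simp only [ins]
    by_cases h : y < a
    · simp only [h, if_true]
      refine Relation.ReflTransGen.head ?_ (equiv_cons ih)
      exact PCM.Adj.swap [] t a y (ne_of_gt h) (Or.inr h.le)
    · simp only [h, if_false]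
      exact Relation.ReflTransGen.refl

lemma ins_comm_lt {a b : X} (hab : a < b) (l : List X) :
    ins a (ins b l) = ins b (ins a l) := by
  induction l with
  | nil =>
    simp [ins, hab, not_lt_of_gt hab, hab.not_gt]
  | cons y t ih =>
    by_cases h1 : y < a
    · have h2 : y < b := h1.trans hab
      simp [ins, h1, h2, ih]
    · by_cases h2 : y < b
      · simp [ins, h1, h2, hab, hab.not_gt]
      · simp [ins, h1, h2, hab, hab.not_gt]

lemma ins_comm {a b : X} (hne : a ≠ b) (hcomp : a ≤ b ∨ b ≤ a) (l : List X) :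
    ins a (ins b l) = ins b (ins a l) := by
  rcases hcomp with h | h
  · exact ins_comm_lt (lt_of_le_of_ne h hne) l
  · exact (ins_comm_lt (lt_of_le_of_ne h hne.symm) l).symm

lemma norm_adj {w w' : List X} (h : PCM.Adj w w') : norm w = norm w' := by
  cases h with
  | swap u v a b hne hcomp =>
    induction u with
    | nil => simpa [norm] using ins_comm hne hcomp (norm v)
    | cons c u ih => simp [norm, ih]

lemma norm_equiv {w w' : List X} (h : PCM.Equiv w w') : norm w = norm w' := by
  induction h with
  | refl => rfl
  | tail _ h2 ih => exact ih.trans (norm_adj h2)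

lemma equiv_norm (w : List X) : PCM.Equiv w (norm w) := by
  induction w with
  | nil => exact Relation.ReflTransGen.refl
  | cons a t ih =>
    exact (equiv_cons ih).trans (equiv_ins a (norm t))

lemma chain'_ins {a : X} {l : List X} (h : List.Chain' (fun x y => ¬ y < x) l) :
    List.Chain' (fun x y => ¬ y < x) (ins a l) := by
  induction l with
  | nil => simp [ins, List.Chain']
  | cons y t ih =>
    rw [List.Chain', List.isChain_cons] at h
    by_cases hy : y < a
    · simp only [ins, hy, if_true]
      rw [List.Chain', List.isChain_cons]
      refine ⟨?_, ih h.2⟩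
      intro z hz
      cases t with
      | nil => simp [ins] at hz; subst hz; exact not_lt_of_gt hy
      | cons u t' =>
        simp only [ins] at hz
        by_cases hu : u < a
        · simp only [hu, if_true] at hz
          simp at hz
          subst hz
          exact h.1 u rfl
        · simp only [hu, if_false] at hz
          simp at hz
          subst hz
          exact not_lt_of_gt hy
    · simp only [ins, hy, if_false]
      rw [List.Chain', List.isChain_cons_cons]
      exact ⟨hy, List.isChain_cons.2 h⟩

lemma chain'_norm (w : List X) : List.Chain' (fun x y => ¬ y < x) (norm w) := by
  induction w with
  | nil => simp [norm, List.Chain']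
  | cons a t ih => exact chain'_ins ih

lemma norm_of_chain' {w : List X} (h : List.Chain' (fun x y => ¬ y < x) w) :
    norm w = w := by
  induction w with
  | nil => rfl
  | cons a t ih =>
    rw [List.Chain', List.isChain_cons] at h
    have ht := ih h.2
    simp only [norm, ht]
    cases t with
    | nil => rfl
    | cons y t' => simp [ins, h.1 y rfl]

lemma des_empty_iff {w : List X} :
    PCM.DES w = ∅ ↔ List.Chain' (fun x y => ¬ y < x) w := by
  rw [List.Chain', List.isChain_iff_getElem, Set.eq_empty_iff_forall_notMem]
  constructor
  · intro h i hi
    have := h (i + 1)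
    simp only [PCM.DES, Set.mem_setOf_eq, not_exists] at this
    have hlt : i + 1 < w.length := by omega
    have := this hlt
    simp only [Nat.add_sub_cancel] at this
    intro hc
    exact this ⟨Nat.succ_pos i, by simpa [List.get_eq_getElem] using hc⟩
  · intro h i hi
    obtain ⟨hlen, hpos, hlt⟩ := hi
    have hi1 : i - 1 + 1 < w.length := by omega
    have := h (i - 1) hi1
    apply this
    have : i - 1 + 1 = i := by omega
    simpa [List.get_eq_getElem, this] using hlt

end PCMAux

theorem stmt_0 {X : Type*} [PartialOrder X] (w : List X) :
    ∃! w' : List X, PCM.Equiv w w' ∧ PCM.DES w' = ∅ := by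
  refine ⟨PCMAux.norm w, ⟨PCMAux.equiv_norm w,
    PCMAux.des_empty_iff.2 (PCMAux.chain'_norm w)⟩, ?_⟩
  rintro w'' ⟨hequiv, hdes⟩
  have h1 : PCMAux.norm w'' = w'' := PCMAux.norm_of_chain' (PCMAux.des_empty_iff.1 hdes)
  rw [← h1, PCMAux.norm_equiv hequiv]
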